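/- Let {A_n} be a sequence of matrices with A_n of size d_n, d_n → ∞, and suppose A_n = R_n + N_n with rank(R_n)/d_n → 0 and ‖N_n‖ → 0 (spectral norm). Then for every continuous compactly supported F : ℝ → ℝ, (1/d_n) ∑_{i=1}^{d_n} F(σ_i(A_n)) → F(0). -/

import Mathlib

open Matrix
open scoped ComplexOrder Classical

/-- Square root of a matrix: the unique PSD square root when `M` is positive
semidefinite, junk value `0` otherwise. -/
noncomputable def msqrt {m : Type*} [Fintype m] [DecidableEq m] (M : Matrix m m ℂ) :
    Matrix m m ℂ :=
  if h : M.PosSemidef then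
    (h.1.eigenvectorUnitary : Matrix m m ℂ) * diagonal ((↑) ∘ (h.1.eigenvalues · |>.sqrt)) *
      (star h.1.eigenvectorUnitary : Matrix m m ℂ)
  else 0

/-- The matrix geometric mean `G(A,B) = A^{1/2} (A^{-1/2} B A^{-1/2})^{1/2} A^{1/2}`. -/
noncomputable def Matrix.PosSemidef.sqrt {m : Type*} [Fintype m] [DecidableEq m]
    {M : Matrix m m ℂ} (h : M.PosSemidef) : Matrix m m ℂ :=
  (h.1.eigenvectorUnitary : Matrix m m ℂ) * diagonal ((↑) ∘ (h.1.eigenvalues · |>.sqrt)) *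
    (star h.1.eigenvectorUnitary : Matrix m m ℂ)

lemma Matrix.PosSemidef.posSemidef_sqrt {m : Type*} [Fintype m] [DecidableEq m]
    {M : Matrix m m ℂ} (h : M.PosSemidef) : h.sqrt.PosSemidef := by
  have hd : (diagonal ((↑) ∘ (h.1.eigenvalues · |>.sqrt)) : Matrix m m ℂ).PosSemidef :=
    posSemidef_diagonal_iff.mpr fun i => by
      simp [Complex.zero_le_real, Real.sqrt_nonneg]
  have := hd.mul_mul_conjTranspose_same (h.1.eigenvectorUnitary : Matrix m m ℂ)
  unfold Matrix.PosSemidef.sqrt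
  convert this using 1
  rfl

lemma Matrix.PosSemidef.sqrt_mul_self {m : Type*} [Fintype m] [DecidableEq m]
    {M : Matrix m m ℂ} (h : M.PosSemidef) : h.sqrt * h.sqrt = M := by
  let C : Matrix m m ℂ := h.1.eigenvectorUnitary
  let E := (diagonal ((↑) ∘ (h.1.eigenvalues · |>.sqrt)) : Matrix m m ℂ)
  have hCC : star C * C = 1 := Matrix.mem_unitaryGroup_iff'.mp h.1.eigenvectorUnitary.2
  have hE : E * E = diagonal ((↑) ∘ h.1.eigenvalues) := by
    rw [diagonal_mul_diagonal]; congr 1; funext v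
    simp [← pow_two, ← Complex.ofReal_pow, Real.sq_sqrt (h.eigenvalues_nonneg v)]
  have hs := h.1.spectral_theorem
  rw [Unitary.conjStarAlgAut_apply] at hs
  change (C * E * star C) * (C * E * star C) = M
  calc (C * E * star C) * (C * E * star C) = C * (E * (star C * C) * E) * star C := by
        simp only [mul_assoc]
    _ = M := by rw [hCC, mul_one, hE]; exact hs.symm

noncomputable def matGM {m : Type*} [Fintype m] [DecidableEq m] (A B : Matrix m m ℂ) :
    Matrix m m ℂ :=
  msqrt A * msqrt ((msqrt A)⁻¹ * B * (msqrt A)⁻¹) * msqrt A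

/-- Singular values of a square complex matrix: the eigenvalues of `(MᴴM)^{1/2}`. -/
noncomputable def singVals {m : Type*} [Fintype m] [DecidableEq m] (M : Matrix m m ℂ) :
    m → ℝ :=
  if h : (msqrt (Mᴴ * M)).IsHermitian then h.eigenvalues else 0

/-- Spectral (operator) norm of a square complex matrix: the largest singular value. -/
noncomputable def specNorm {m : Type*} [Fintype m] [DecidableEq m] (M : Matrix m m ℂ) : ℝ :=
  ⨆ i, singVals M i

/-- Schatten `p`-norm: the `ℓ^p` norm of the vector of singular values. -/
noncomputable def schattenNorm {m : Type*} [Fintype m] [DecidableEq m] (p : ℝ)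
    (M : Matrix m m ℂ) : ℝ :=
  (∑ i, singVals M i ^ p) ^ (1 / p)

noncomputable def n2 {m : Type*} [Fintype m] (x : m → ℂ) : ℝ := ∑ i, ‖x i‖ ^ 2

lemma dot_self_eq {m : Type*} [Fintype m] (x : m → ℂ) :
    star x ⬝ᵥ x = (n2 x : ℂ) := by
  simp [dotProduct, n2, Pi.star_apply, RCLike.conj_mul]

lemma n2_nonneg {m : Type*} [Fintype m] (x : m → ℂ) : 0 ≤ n2 x :=
  Finset.sum_nonneg fun i _ => by positivity

lemma conj_dot {m : Type*} [Fintype m] (U C : Matrix m m ℂ) (hstar : (star U)ᴴ = U)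
    (x : m → ℂ) :
    star (star U *ᵥ x) ⬝ᵥ (C *ᵥ (star U *ᵥ x)) = star x ⬝ᵥ ((U * C * star U) *ᵥ x) := by
  rw [star_mulVec, hstar, ← Matrix.dotProduct_mulVec, mulVec_mulVec, mulVec_mulVec]

lemma singVals_nonneg {m : Type*} [Fintype m] [DecidableEq m] (M : Matrix m m ℂ) (i : m) :
    0 ≤ singVals M i := by
  have hP : (Mᴴ * M).PosSemidef := posSemidef_conjTranspose_mul_self M
  have hmsqrt : msqrt (Mᴴ * M) = hP.sqrt := dif_pos hP
  have hSpsd : (msqrt (Mᴴ * M)).PosSemidef := hmsqrt ▸ hP.posSemidef_sqrt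
  have hsv : singVals M = hSpsd.1.eigenvalues := dif_pos hSpsd.1
  rw [hsv]
  exact hSpsd.eigenvalues_nonneg i

lemma spectral_data {m : Type*} [Fintype m] [DecidableEq m] (M : Matrix m m ℂ) :
    ∃ U : Matrix m m ℂ, star U * U = 1 ∧ U * star U = 1 ∧
      (∀ x : m → ℂ, n2 (star U *ᵥ x) = n2 x) ∧
      (∀ x : m → ℂ, n2 (M *ᵥ x) = ∑ j, (singVals M j) ^ 2 * ‖(star U *ᵥ x) j‖ ^ 2) := by
  have hP : (Mᴴ * M).PosSemidef := posSemidef_conjTranspose_mul_self M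
  have hmsqrt : msqrt (Mᴴ * M) = hP.sqrt := dif_pos hP
  have hSpsd : (msqrt (Mᴴ * M)).PosSemidef := hmsqrt ▸ hP.posSemidef_sqrt
  have hS : (msqrt (Mᴴ * M)).IsHermitian := hSpsd.1
  have hsv : singVals M = hS.eigenvalues := dif_pos hS
  set U : Matrix m m ℂ := (hS.eigenvectorUnitary : Matrix m m ℂ) with hUdef
  have hU1 : star U * U = 1 := Matrix.mem_unitaryGroup_iff'.mp hS.eigenvectorUnitary.2
  have hU2 : U * star U = 1 := Matrix.mem_unitaryGroup_iff.mp hS.eigenvectorUnitary.2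
  have hstarstar : (star U)ᴴ = U := by
    rw [Matrix.star_eq_conjTranspose, conjTranspose_conjTranspose]
  refine ⟨U, hU1, hU2, ?_, ?_⟩
  · intro x
    have h1 : (n2 (star U *ᵥ x) : ℂ) = (n2 x : ℂ) := by
      rw [← dot_self_eq, ← dot_self_eq, star_mulVec, hstarstar,
        ← Matrix.dotProduct_mulVec, mulVec_mulVec, hU2, one_mulVec]
    exact_mod_cast h1
  · intro x
    have key : hP.sqrt = U * diagonal (RCLike.ofReal ∘ hS.eigenvalues) * star U := by
      rw [← hmsqrt]; have hs := hS.spectral_theorem; rw [Unitary.conjStarAlgAut_apply] at hs; exact hs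
    have hMM : Mᴴ * M = U * diagonal (fun j => ((hS.eigenvalues j : ℂ)) ^ 2) * star U := by
      calc Mᴴ * M = hP.sqrt * hP.sqrt := hP.sqrt_mul_self.symm
        _ = (U * diagonal (RCLike.ofReal ∘ hS.eigenvalues) * star U) *
            (U * diagonal (RCLike.ofReal ∘ hS.eigenvalues) * star U) := by rw [key]
        _ = U * (diagonal (RCLike.ofReal ∘ hS.eigenvalues) * (star U * U) *
            diagonal (RCLike.ofReal ∘ hS.eigenvalues)) * star U := by noncomm_ring
        _ = U * diagonal (fun j => ((hS.eigenvalues j : ℂ)) ^ 2) * star U := by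
            rw [hU1, mul_one, diagonal_mul_diagonal]
            congr 2
            funext j
            simp [sq]
    have h1 : (n2 (M *ᵥ x) : ℂ)
        = ∑ j, ((singVals M j : ℂ)) ^ 2 * ((‖(star U *ᵥ x) j‖ : ℂ)) ^ 2 := by
      rw [← dot_self_eq, star_mulVec, ← Matrix.dotProduct_mulVec, mulVec_mulVec, hMM,
        ← conj_dot U _ hstarstar x, dotProduct]
      rw [hsv]
      congr 1
      funext j
      rw [mulVec_diagonal]
      rw [Pi.star_apply, show star ((star U *ᵥ x) j) * ((hS.eigenvalues j : ℂ) ^ 2 * (star U *ᵥ x) j)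
        = (hS.eigenvalues j : ℂ) ^ 2 * (star ((star U *ᵥ x) j) * (star U *ᵥ x) j) by ring]
      congr 1
      rw [RCLike.star_def, RCLike.conj_mul]
      norm_cast
    have := h1
    push_cast at this
    exact_mod_cast h1

lemma n2_mulVec_le {m : Type*} [Fintype m] [DecidableEq m] (N : Matrix m m ℂ) (x : m → ℂ) :
    n2 (N *ᵥ x) ≤ specNorm N ^ 2 * n2 x := by
  obtain ⟨U, hU1, hU2, hn, hq⟩ := spectral_data N
  rw [hq x, ← hn x]
  have hzdef : n2 (star U *ᵥ x) = ∑ j, ‖(star U *ᵥ x) j‖ ^ 2 := rfl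
  rw [hzdef, Finset.mul_sum]
  refine Finset.sum_le_sum fun j _ => ?_
  refine mul_le_mul_of_nonneg_right ?_ (by positivity)
  refine pow_le_pow_left₀ (singVals_nonneg N j) ?_ 2
  exact le_ciSup (Set.Finite.bddAbove (Set.finite_range _)) j

lemma count_le {m : Type*} [Fintype m] [DecidableEq m] (A R N : Matrix m m ℂ)
    (hsum : A = R + N) (c : ℝ) (hc : 0 ≤ c)
    (hNle : ∀ x, n2 (N *ᵥ x) ≤ c ^ 2 * n2 x) :
    (Finset.univ.filter (fun i => c < singVals A i)).card ≤ R.rank := by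
  by_contra hcon
  push_neg at hcon
  set T := Finset.univ.filter (fun i => c < singVals A i) with hT
  obtain ⟨U, hU1, hU2, hn, hq⟩ := spectral_data A
  have hUinj : Function.Injective (Matrix.mulVecLin U) := by
    intro a b hab
    have := congrArg (fun v => star U *ᵥ v) hab
    simpa [Matrix.mulVecLin_apply, mulVec_mulVec, hU1] using this
  let ext : ({i // i ∈ T} → ℂ) →ₗ[ℂ] (m → ℂ) :=
    { toFun := fun w i => if h : i ∈ T then w ⟨i, h⟩ else 0
      map_add' := by
        intro w w'; funext i; by_cases h : i ∈ T <;> simp [h]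
      map_smul' := by
        intro a w; funext i; by_cases h : i ∈ T <;> simp [h] }
  have hext_inj : Function.Injective ext := by
    intro w w' hww
    funext i
    have := congrFun hww i.1
    simpa [ext, i.2] using this
  have hg_inj : Function.Injective ((Matrix.mulVecLin U).comp ext) := by
    intro a b hab
    exact hext_inj (hUinj hab)
  set W1 := LinearMap.range ((Matrix.mulVecLin U).comp ext) with hW1
  set W2 := LinearMap.ker (Matrix.mulVecLin R) with hW2
  have hW1rank : Module.finrank ℂ W1 = T.card := by
    rw [LinearMap.finrank_range_of_inj hg_inj]
    simp [Module.finrank_fintype_fun_eq_card]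
  have hrn : R.rank + Module.finrank ℂ W2 = Module.finrank ℂ (m → ℂ) :=
    LinearMap.finrank_range_add_finrank_ker _
  have hsupinf := Submodule.finrank_sup_add_finrank_inf_eq W1 W2
  have hsuple : Module.finrank ℂ (W1 ⊔ W2 : Submodule ℂ (m → ℂ)) ≤ Module.finrank ℂ (m → ℂ) :=
    Submodule.finrank_le _
  have hpos : 0 < Module.finrank ℂ (W1 ⊓ W2 : Submodule ℂ (m → ℂ)) := by omega
  have hne : (W1 ⊓ W2 : Submodule ℂ (m → ℂ)) ≠ ⊥ := by
    intro hbot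
    rw [hbot, finrank_bot] at hpos
    omega
  obtain ⟨x, hxmem, hx0⟩ := Submodule.ne_bot_iff _ |>.mp hne
  obtain ⟨hxW1, hxW2⟩ := Submodule.mem_inf.mp hxmem
  obtain ⟨w, hw⟩ := hxW1
  set z : m → ℂ := ext w with hz
  have hxz : x = U *ᵥ z := by
    rw [← hw]; rfl
  have hzvanish : ∀ j ∉ T, z j = 0 := fun j hj => dif_neg hj
  have hzx : star U *ᵥ x = z := by
    rw [hxz, mulVec_mulVec, hU1, one_mulVec]
  have hRx : R *ᵥ x = 0 := hxW2
  have hAx : A *ᵥ x = N *ᵥ x := by rw [hsum, add_mulVec, hRx, zero_add]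
  have h1 : n2 (A *ᵥ x) = ∑ j, singVals A j ^ 2 * ‖z j‖ ^ 2 := by rw [hq x, hzx]
  have h2 : n2 x = ∑ j, ‖z j‖ ^ 2 := by
    rw [← hn x, hzx]; rfl
  have hzsubT1 : ∑ j, singVals A j ^ 2 * ‖z j‖ ^ 2 = ∑ j ∈ T, singVals A j ^ 2 * ‖z j‖ ^ 2 :=
    (Finset.sum_subset (Finset.subset_univ T) (fun j _ hj => by
      rw [hzvanish j hj]; simp)).symm
  have hzsubT2 : ∑ j, ‖z j‖ ^ 2 = ∑ j ∈ T, ‖z j‖ ^ 2 :=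
    (Finset.sum_subset (Finset.subset_univ T) (fun j _ hj => by
      rw [hzvanish j hj]; simp)).symm
  have hzne : z ≠ 0 := by
    intro h0
    apply hx0
    rw [hxz, h0, mulVec_zero]
  obtain ⟨j₀, hj₀⟩ := Function.ne_iff.mp hzne
  have hj₀T : j₀ ∈ T := by
    by_contra h
    exact hj₀ (hzvanish j₀ h)
  have hstrict : ∑ j ∈ T, c ^ 2 * ‖z j‖ ^ 2 < ∑ j ∈ T, singVals A j ^ 2 * ‖z j‖ ^ 2 := by
    refine Finset.sum_lt_sum (fun i hi => ?_) ⟨j₀, hj₀T, ?_⟩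
    · refine mul_le_mul_of_nonneg_right ?_ (by positivity)
      refine pow_le_pow_left₀ hc ?_ 2
      exact le_of_lt (Finset.mem_filter.mp hi).2
    · refine mul_lt_mul_of_pos_right ?_ ?_
      · exact pow_lt_pow_left₀ (Finset.mem_filter.mp hj₀T).2 hc two_ne_zero
      · have hz0 : z j₀ ≠ 0 := hj₀
        have : ‖z j₀‖ ≠ 0 := norm_ne_zero_iff.mpr hz0
        positivity
  have hub : n2 (A *ᵥ x) ≤ c ^ 2 * n2 x := by rw [hAx]; exact hNle x
  rw [h1, hzsubT1, h2, hzsubT2, Finset.mul_sum] at hub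
  exact absurd (lt_of_lt_of_le hstrict hub) (lt_irrefl _)


open Filter in
theorem stmt11 {d : ℕ → ℕ} (hd : StrictMono d)
    (A R N : ∀ k, Matrix (Fin (d k)) (Fin (d k)) ℂ)
    (hsum : ∀ k, A k = R k + N k)
    (hR : Tendsto (fun k => ((R k).rank : ℝ) / (d k : ℝ)) atTop (nhds 0))
    (hN : Tendsto (fun k => specNorm (N k)) atTop (nhds 0)) :
    ∀ F : ℝ → ℝ, Continuous F → HasCompactSupport F →
      Tendsto (fun k => (1 / (d k : ℝ)) * ∑ i, F (singVals (A k) i)) atTop (nhds (F 0)) := by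
  intro F hFc hFs
  obtain ⟨C, hC⟩ := hFc.bounded_above_of_compact_support hFs
  have hC0 : 0 ≤ C := le_trans (norm_nonneg (F 0)) (hC 0)
  rw [Metric.tendsto_atTop]
  intro δ hδ
  obtain ⟨ε, hε, hFε⟩ := Metric.continuous_iff.mp hFc 0 (δ / 2) (by positivity)
  set η := δ / (2 * (2 * C + 1)) with hηdef
  have hη0 : 0 < η := by positivity
  obtain ⟨K1, hK1⟩ := Metric.tendsto_atTop.mp hR η hη0
  obtain ⟨K2, hK2⟩ := Metric.tendsto_atTop.mp hN ε hε
  refine ⟨max K1 (max K2 1), fun k hk => ?_⟩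
  have hk1 : K1 ≤ k := le_trans (le_max_left _ _) hk
  have hk2 : K2 ≤ k := le_trans (le_trans (le_max_left _ _) (le_max_right _ _)) hk
  have hk3 : 1 ≤ k := le_trans (le_trans (le_max_right _ _) (le_max_right _ _)) hk
  have hdk : 1 ≤ d k := le_trans hk3 hd.le_apply
  have hn0 : (0:ℝ) < (d k : ℝ) := by exact_mod_cast hdk
  set c := specNorm (N k) with hcdef
  have hc0 : 0 ≤ c := Real.iSup_nonneg fun i => singVals_nonneg _ i
  have hcε : c < ε := by
    have := hK2 k hk2
    rw [Real.dist_eq, sub_zero] at this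
    exact lt_of_le_of_lt (le_abs_self c) this
  have hrankη : ((R k).rank : ℝ) / (d k : ℝ) < η := by
    have := hK1 k hk1
    rw [Real.dist_eq, sub_zero] at this
    exact lt_of_le_of_lt (le_abs_self _) this
  set T := Finset.univ.filter (fun i => c < singVals (A k) i) with hT
  have hTcard : T.card ≤ (R k).rank :=
    count_le (A k) (R k) (N k) (hsum k) c hc0 (n2_mulVec_le (N k))
  rw [Real.dist_eq]
  have hsum_eq : (1 / (d k : ℝ)) * (∑ i, F (singVals (A k) i)) - F 0
      = (1 / (d k : ℝ)) * ∑ i, (F (singVals (A k) i) - F 0) := by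
    rw [Finset.sum_sub_distrib, Finset.sum_const, Finset.card_univ, Fintype.card_fin,
      nsmul_eq_mul]
    field_simp
  rw [hsum_eq]
  have habs : |(1 / (d k : ℝ)) * ∑ i, (F (singVals (A k) i) - F 0)|
      ≤ (1 / (d k : ℝ)) * ∑ i, |F (singVals (A k) i) - F 0| := by
    rw [abs_mul, abs_of_nonneg (by positivity : (0:ℝ) ≤ 1 / (d k : ℝ))]
    exact mul_le_mul_of_nonneg_left (Finset.abs_sum_le_sum_abs _ _) (by positivity)
  have hsplit : ∑ i, |F (singVals (A k) i) - F 0|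
      = (∑ i ∈ T, |F (singVals (A k) i) - F 0|)
        + ∑ i ∈ Finset.univ.filter (fun i => ¬ c < singVals (A k) i),
            |F (singVals (A k) i) - F 0| :=
    (Finset.sum_filter_add_sum_filter_not _ _ _).symm
  have b1 : ∑ i ∈ T, |F (singVals (A k) i) - F 0| ≤ (T.card : ℝ) * (2 * C) := by
    have := Finset.sum_le_card_nsmul T (fun i => |F (singVals (A k) i) - F 0|) (2 * C)
      (fun i _ => by
        calc |F (singVals (A k) i) - F 0| ≤ |F (singVals (A k) i)| + |F 0| := abs_sub _ _
          _ ≤ C + C := add_le_add (hC _) (hC _)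
          _ = 2 * C := by ring)
    simpa [nsmul_eq_mul] using this
  have b2 : ∑ i ∈ Finset.univ.filter (fun i => ¬ c < singVals (A k) i),
      |F (singVals (A k) i) - F 0| ≤ (d k : ℝ) * (δ / 2) := by
    have hterm : ∀ i ∈ Finset.univ.filter (fun i => ¬ c < singVals (A k) i),
        |F (singVals (A k) i) - F 0| ≤ δ / 2 := by
      intro i hi
      have hile : singVals (A k) i ≤ c := not_lt.mp (Finset.mem_filter.mp hi).2
      have hdist : dist (singVals (A k) i) 0 < ε := by
        rw [Real.dist_eq, sub_zero, abs_of_nonneg (singVals_nonneg _ i)]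
        exact lt_of_le_of_lt hile hcε
      have := hFε _ hdist
      rw [Real.dist_eq] at this
      exact le_of_lt this
    have h1 := Finset.sum_le_card_nsmul _ _ _ hterm
    have hcard : ((Finset.univ.filter (fun i => ¬ c < singVals (A k) i)).card : ℝ) ≤ (d k : ℝ) := by
      have := Finset.card_filter_le Finset.univ (fun i => ¬ c < singVals (A k) i)
      rw [Finset.card_univ, Fintype.card_fin] at this
      exact_mod_cast this
    calc ∑ i ∈ Finset.univ.filter (fun i => ¬ c < singVals (A k) i),
          |F (singVals (A k) i) - F 0|
        ≤ ((Finset.univ.filter (fun i => ¬ c < singVals (A k) i)).card : ℝ) * (δ / 2) := by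
          simpa [nsmul_eq_mul] using h1
      _ ≤ (d k : ℝ) * (δ / 2) := mul_le_mul_of_nonneg_right hcard (by positivity)
  have hchain : (1 / (d k : ℝ)) * ∑ i, |F (singVals (A k) i) - F 0|
      ≤ (((R k).rank : ℝ) / (d k : ℝ)) * (2 * C) + δ / 2 := by
    rw [hsplit]
    calc (1 / (d k : ℝ)) * ((∑ i ∈ T, |F (singVals (A k) i) - F 0|)
          + ∑ i ∈ Finset.univ.filter (fun i => ¬ c < singVals (A k) i),
              |F (singVals (A k) i) - F 0|)
        ≤ (1 / (d k : ℝ)) * ((T.card : ℝ) * (2 * C) + (d k : ℝ) * (δ / 2)) :=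
          mul_le_mul_of_nonneg_left (add_le_add b1 b2) (by positivity)
      _ = ((T.card : ℝ) / (d k : ℝ)) * (2 * C) + δ / 2 := by
          field_simp
      _ ≤ (((R k).rank : ℝ) / (d k : ℝ)) * (2 * C) + δ / 2 := by
          have hTc : (T.card : ℝ) ≤ ((R k).rank : ℝ) := by exact_mod_cast hTcard
          gcongr
  have hlast : (((R k).rank : ℝ) / (d k : ℝ)) * (2 * C) + δ / 2 < δ := by
    have h1 : (((R k).rank : ℝ) / (d k : ℝ)) * (2 * C) ≤ η * (2 * C) :=
      mul_le_mul_of_nonneg_right (le_of_lt hrankη) (by positivity)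
    have h2 : η * (2 * C) < δ / 2 := by
      rw [hηdef]
      rw [div_mul_eq_mul_div, div_lt_div_iff₀ (by positivity) (by positivity)]
      nlinarith
    linarith
  exact lt_of_le_of_lt (le_trans habs hchain) hlast
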